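/- arXiv:2002.06934 — 2 statements merged into one kernel-verified Lean document; each statement's English description precedes it below -/
import Mathlib

section
/- If T is a strongly Cesàro bounded operator on a complex Banach space X, then its adjoint T* is strongly Cesàro bounded on X*. -/
open MeasureTheory Filter Asymptotics Finset

/-- `T` is strongly Cesàro bounded with constant `C`. -/
def StrongCesaroBounded {X : Type} [NormedAddCommGroup X] [NormedSpace ℂ X]
    (T : X →L[ℂ] X) (C : ℝ) : Prop :=
  0 < C ∧ ∀ n : ℕ, 1 ≤ n → ∀ x : X, ∀ φ : StrongDual ℂ X,
    ∑ k ∈ Finset.range n, ‖φ ((T ^ k) x)‖ ≤ C * n * ‖φ‖ * ‖x‖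

/-- The Banach-space adjoint of `T`, acting on the dual space by `φ ↦ φ ∘ T`. -/
noncomputable def banachAdjoint {X : Type} [NormedAddCommGroup X] [NormedSpace ℂ X]
    (T : X →L[ℂ] X) : StrongDual ℂ X →L[ℂ] StrongDual ℂ X :=
  (ContinuousLinearMap.compSL X X ℂ (RingHom.id ℂ) (RingHom.id ℂ)).flip T

set_option synthInstance.maxHeartbeats 200000 in
lemma banachAdjoint_pow_apply {X : Type} [NormedAddCommGroup X] [NormedSpace ℂ X]
    (T : X →L[ℂ] X) (k : ℕ) (φ : StrongDual ℂ X) (x : X) :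
    ((banachAdjoint T ^ k) φ) x = φ ((T ^ k) x) := by
  induction k generalizing φ with
  | zero => simp
  | succ k ih =>
    rw [pow_succ, pow_succ']
    simp only [ContinuousLinearMap.mul_apply]
    rw [ih]
    rfl

set_option synthInstance.maxHeartbeats 200000 in
theorem strong_cesaro_bounded_adjoint
    {X : Type} [NormedAddCommGroup X] [NormedSpace ℂ X]
    (T : X →L[ℂ] X) (C : ℝ) (h : StrongCesaroBounded T C) :
    ∃ C' : ℝ, StrongCesaroBounded (banachAdjoint T) C' := by
  obtain ⟨hC, hT⟩ := h
  refine ⟨C, hC, fun n hn φ Φ => ?_⟩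
  set g : ℕ → ℂ := fun k => Φ ((banachAdjoint T ^ k) φ) with hg
  set lam : ℕ → ℂ := fun k =>
    if g k = 0 then 1 else (starRingEnd ℂ) (g k) / (‖g k‖ : ℂ) with hlam
  have hlam_norm : ∀ k, ‖lam k‖ = 1 := by
    intro k
    by_cases hk : g k = 0
    · simp [hlam, hk]
    · simp only [hlam, if_neg hk]
      rw [norm_div, RCLike.norm_conj, Complex.norm_real, Real.norm_eq_abs, abs_norm,
        div_self (norm_ne_zero_iff.mpr hk)]
  have hlam_mul : ∀ k, lam k * g k = (‖g k‖ : ℂ) := by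
    intro k
    by_cases hk : g k = 0
    · simp [hlam, hk]
    · simp only [hlam, if_neg hk]
      have hne : (‖g k‖ : ℂ) ≠ 0 := by
        simpa using hk
      have : (starRingEnd ℂ) (g k) * g k = (‖g k‖ : ℂ) ^ 2 := by
        rw [mul_comm, Complex.mul_conj]
        norm_cast
        rw [Complex.normSq_eq_norm_sq]
      rw [div_mul_eq_mul_div, this, sq, mul_div_assoc, div_self hne, mul_one]
  set ψ : StrongDual ℂ X :=
    ∑ k ∈ Finset.range n, lam k • ((banachAdjoint T ^ k) φ) with hψ
  have hΦψ : Φ ψ = ((∑ k ∈ Finset.range n, ‖g k‖ : ℝ) : ℂ) := by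
    rw [hψ, map_sum]
    push_cast
    refine Finset.sum_congr rfl fun k _ => ?_
    rw [_root_.map_smul, smul_eq_mul, ← hlam_mul k]
    simp [g]
  have hsum_eq : ∑ k ∈ Finset.range n, ‖g k‖ = ‖Φ ψ‖ := by
    rw [hΦψ, Complex.norm_real, Real.norm_eq_abs, abs_of_nonneg]
    positivity
  have hψ_norm : ‖ψ‖ ≤ C * n * ‖φ‖ := by
    apply ContinuousLinearMap.opNorm_le_bound
    · positivity
    · intro x
      have : ψ x = ∑ k ∈ Finset.range n, lam k * φ ((T ^ k) x) := by
        rw [hψ]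
        simp only [ContinuousLinearMap.coe_sum', Finset.sum_apply,
          ContinuousLinearMap.coe_smul', Pi.smul_apply, smul_eq_mul]
        refine Finset.sum_congr rfl fun k _ => ?_
        rw [banachAdjoint_pow_apply]
      rw [this]
      calc ‖∑ k ∈ Finset.range n, lam k * φ ((T ^ k) x)‖
          ≤ ∑ k ∈ Finset.range n, ‖lam k * φ ((T ^ k) x)‖ := norm_sum_le _ _
        _ = ∑ k ∈ Finset.range n, ‖φ ((T ^ k) x)‖ := by
            refine Finset.sum_congr rfl fun k _ => ?_
            rw [norm_mul, hlam_norm, one_mul]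
        _ ≤ C * n * ‖φ‖ * ‖x‖ := hT n hn x φ
  calc ∑ k ∈ Finset.range n, ‖Φ ((banachAdjoint T ^ k) φ)‖ = ‖Φ ψ‖ := hsum_eq
    _ ≤ ‖Φ‖ * ‖ψ‖ := Φ.le_opNorm ψ
    _ ≤ ‖Φ‖ * (C * n * ‖φ‖) := by
        apply mul_le_mul_of_nonneg_left hψ_norm (norm_nonneg _)
    _ = C * n * ‖Φ‖ * ‖φ‖ := by ring
end

section
/- Kahane's contraction principle (subset form): if ξ_1, …, ξ_n are independent symmetric X-valued random variables in L^p and I ⊆ J ⊆ {1,…,n}, then E(‖∑_{k∈I} ξ_k‖^p) ≤ E(‖∑_{k∈J} ξ_k‖^p). -/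
open MeasureTheory Filter Asymptotics Finset

open ProbabilityTheory in
/-- Auxiliary: mapping two independent r.v.s through addition. -/
theorem map_add_of_indep_aux
    {X : Type} [NormedAddCommGroup X]
    [MeasurableSpace X] [BorelSpace X] [SecondCountableTopology X]
    {Ω : Type} [MeasurableSpace Ω] {μ : Measure Ω} [IsProbabilityMeasure μ]
    {U V : Ω → X} (hU : Measurable U) (hV : Measurable V)
    (h : IndepFun U V μ) :
    μ.map (fun ω => U ω + V ω)
      = ((μ.map U).prod (μ.map V)).map (fun p : X × X => p.1 + p.2) := by
  rw [← (indepFun_iff_map_prod_eq_prod_map_map hU.aemeasurable hV.aemeasurable).1 h,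
      Measure.map_map measurable_add (hU.prodMk hV)]
  rfl

open ProbabilityTheory in
/-- Auxiliary: a finite sum of independent symmetric random variables is symmetric. -/
theorem symm_sum_aux
    {X : Type} [NormedAddCommGroup X]
    [MeasurableSpace X] [BorelSpace X] [SecondCountableTopology X]
    {Ω : Type} [MeasurableSpace Ω] (μ : Measure Ω) [IsProbabilityMeasure μ]
    {n : ℕ} (ξ : Fin n → Ω → X)
    (hmeas : ∀ k, Measurable (ξ k))
    (hindep : iIndepFun ξ μ)
    (hsymm : ∀ k, Measure.map (ξ k) μ = Measure.map (fun ω => -(ξ k ω)) μ)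
    (s : Finset (Fin n)) :
    Measure.map (fun ω => ∑ k ∈ s, ξ k ω) μ
      = Measure.map (fun ω => -∑ k ∈ s, ξ k ω) μ := by
  classical
  induction s using Finset.induction_on with
  | empty => simp
  | @insert a s ha IH =>
    have hV : Measurable (fun ω => ∑ k ∈ s, ξ k ω) :=
      Finset.measurable_sum s (fun k _ => hmeas k)
    have hUV : IndepFun (ξ a) (fun ω => ∑ k ∈ s, ξ k ω) μ := by
      have h := (hindep.indepFun_finsetSum_of_notMem hmeas ha).symm
      have he : (∑ j ∈ s, ξ j) = fun ω => ∑ k ∈ s, ξ k ω := by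
        funext ω; simp [Finset.sum_apply]
      rwa [he] at h
    have hneg : IndepFun (fun ω => -ξ a ω) (fun ω => -∑ k ∈ s, ξ k ω) μ :=
      hUV.comp measurable_neg measurable_neg
    have h1 := map_add_of_indep_aux (hmeas a) hV hUV
    have h2 := map_add_of_indep_aux (μ := μ) (U := fun ω => -ξ a ω) (V := fun ω => -∑ k ∈ s, ξ k ω) (hmeas a).neg hV.neg hneg
    have hVs := IH
    have hUs := hsymm a
    have e1 : Measure.map (fun ω => ∑ k ∈ insert a s, ξ k ω) μ
        = Measure.map (fun ω => ξ a ω + ∑ k ∈ s, ξ k ω) μ := by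
      congr 1; funext ω; exact Finset.sum_insert ha
    have e2 : Measure.map (fun ω => -∑ k ∈ insert a s, ξ k ω) μ
        = Measure.map (fun ω => -ξ a ω + -∑ k ∈ s, ξ k ω) μ := by
      congr 1; funext ω; rw [Finset.sum_insert ha, neg_add]
    rw [e1, e2, h1, h2, ← hUs, ← hVs]

open ProbabilityTheory in
/-- Kahane's contraction principle, subset form, second countable case. -/
theorem kahane_contraction_subset_aux
    {X : Type} [NormedAddCommGroup X] [NormedSpace ℝ X]
    [MeasurableSpace X] [BorelSpace X] [SecondCountableTopology X]
    {Ω : Type} [MeasurableSpace Ω] (μ : Measure Ω) [IsProbabilityMeasure μ]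
    (p : ℝ) (hp : 1 ≤ p) (n : ℕ) (ξ : Fin n → Ω → X)
    (hmeas : ∀ k, Measurable (ξ k))
    (hindep : iIndepFun ξ μ)
    (hsymm : ∀ k, Measure.map (ξ k) μ = Measure.map (fun ω => -(ξ k ω)) μ)
    (hLp : ∀ k, MemLp (ξ k) (ENNReal.ofReal p) μ)
    (I J : Finset (Fin n)) (hIJ : I ⊆ J) :
    ∫ ω, ‖∑ k ∈ I, ξ k ω‖ ^ p ∂μ ≤ ∫ ω, ‖∑ k ∈ J, ξ k ω‖ ^ p ∂μ := by
  classical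
  have hp0 : (0:ℝ) < p := lt_of_lt_of_le zero_lt_one hp
  set S : Ω → X := fun ω => ∑ k ∈ I, ξ k ω with hSdef
  set T : Ω → X := fun ω => ∑ k ∈ J \ I, ξ k ω with hTdef
  have hS : Measurable S := Finset.measurable_sum I (fun k _ => hmeas k)
  have hT : Measurable T := Finset.measurable_sum (J \ I) (fun k _ => hmeas k)
  have hJsum : ∀ ω, (∑ k ∈ J, ξ k ω) = S ω + T ω := by
    intro ω
    rw [add_comm]
    exact (Finset.sum_sdiff hIJ).symm
  -- independence of S and T
  have hST : IndepFun S T μ := by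
    have h := (hindep.indepFun_finset I (J \ I) Finset.sdiff_disjoint.symm hmeas).comp
      (Finset.measurable_sum Finset.univ fun i _ => measurable_pi_apply i)
      (Finset.measurable_sum Finset.univ fun i _ => measurable_pi_apply i)
    have e1 : ((fun v : { x // x ∈ I } → X => ∑ i, v i)
        ∘ fun a (i : { x // x ∈ I }) => ξ i a) = S := by
      funext ω
      simp only [Function.comp, hSdef]
      exact Finset.sum_coe_sort I (fun k => ξ k ω)
    have e2 : ((fun v : { x // x ∈ J \ I } → X => ∑ i, v i)
        ∘ fun a (i : { x // x ∈ J \ I }) => ξ i a) = T := by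
      funext ω
      simp only [Function.comp, hTdef]
      exact Finset.sum_coe_sort (J \ I) (fun k => ξ k ω)
    rwa [e1, e2] at h
  have hTsymm : Measure.map T μ = Measure.map (fun ω => -T ω) μ :=
    symm_sum_aux μ ξ hmeas hindep hsymm (J \ I)
  -- the laws of S - T and S + T coincide
  have hSnegT : IndepFun S (fun ω => -T ω) μ := hST.comp measurable_id measurable_neg
  have hmap : μ.map (fun ω => S ω - T ω) = μ.map (fun ω => S ω + T ω) := by
    have h1 := map_add_of_indep_aux (μ := μ) (V := fun ω => -T ω) hS hT.neg hSnegT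
    have h2 := map_add_of_indep_aux (μ := μ) hS hT hST
    have e : (fun ω => S ω - T ω) = fun ω => S ω + (-T ω) := by
      funext ω; rw [sub_eq_add_neg]
    rw [e, h1, ← hTsymm, ← h2]
  -- transfer to integrals
  have hcont : Continuous fun x : X => ‖x‖ ^ p :=
    continuous_norm.rpow_const (fun x => Or.inr (le_of_lt hp0))
  have hEq : ∫ ω, ‖S ω - T ω‖ ^ p ∂μ = ∫ ω, ‖S ω + T ω‖ ^ p ∂μ := by
    have e1 : ∫ y, ‖y‖ ^ p ∂(μ.map (fun ω => S ω - T ω)) = ∫ ω, ‖S ω - T ω‖ ^ p ∂μ := integral_map (μ := μ) (hS.sub hT).aemeasurable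
      (f := fun x : X => ‖x‖ ^ p) hcont.aestronglyMeasurable
    have e2 : ∫ y, ‖y‖ ^ p ∂(μ.map (fun ω => S ω + T ω)) = ∫ ω, ‖S ω + T ω‖ ^ p ∂μ := integral_map (μ := μ) (hS.add hT).aemeasurable
      (f := fun x : X => ‖x‖ ^ p) hcont.aestronglyMeasurable
    rw [← e1, ← e2, hmap]
  -- integrability
  have hpn0 : (ENNReal.ofReal p) ≠ 0 := by
    simp [ENNReal.ofReal_eq_zero, not_le, hp0]
  have hpnt : (ENNReal.ofReal p) ≠ ⊤ := ENNReal.ofReal_ne_top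
  have htoReal : (ENNReal.ofReal p).toReal = p := ENNReal.toReal_ofReal (le_of_lt hp0)
  have hLpS : MemLp S (ENNReal.ofReal p) μ :=
    memLp_finsetSum I (fun k _ => hLp k)
  have hLpT : MemLp T (ENNReal.ofReal p) μ :=
    memLp_finsetSum (J \ I) (fun k _ => hLp k)
  have hintS : Integrable (fun ω => ‖S ω‖ ^ p) μ := by
    have := hLpS.integrable_norm_rpow hpn0 hpnt
    rwa [htoReal] at this
  have hintAdd : Integrable (fun ω => ‖S ω + T ω‖ ^ p) μ := by
    have h := (hLpS.add hLpT).integrable_norm_rpow hpn0 hpnt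
    rw [htoReal] at h
    exact h.congr (Filter.Eventually.of_forall fun ω => by simp [Pi.add_apply])
  have hintSub : Integrable (fun ω => ‖S ω - T ω‖ ^ p) μ := by
    have h := (hLpS.sub hLpT).integrable_norm_rpow hpn0 hpnt
    rw [htoReal] at h
    exact h.congr (Filter.Eventually.of_forall fun ω => by simp [Pi.sub_apply])
  -- pointwise convexity bound
  have hpoint : ∀ ω, ‖S ω‖ ^ p ≤ (‖S ω + T ω‖ ^ p + ‖S ω - T ω‖ ^ p) / 2 := by
    intro ω
    set a := ‖S ω + T ω‖ with hadef
    set b := ‖S ω - T ω‖ with hbdef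
    have ha : 0 ≤ a := norm_nonneg _
    have hb : 0 ≤ b := norm_nonneg _
    have key : ‖S ω‖ ≤ (a + b) / 2 := by
      have h := norm_add_le (S ω + T ω) (S ω - T ω)
      have e : (S ω + T ω) + (S ω - T ω) = (2:ℝ) • S ω := by module
      rw [e, norm_smul] at h
      have h2 : ‖(2:ℝ)‖ = 2 := by norm_num [Real.norm_eq_abs]
      rw [h2] at h
      linarith
    have step1 : ‖S ω‖ ^ p ≤ ((a + b) / 2) ^ p :=
      Real.rpow_le_rpow (norm_nonneg _) key (le_of_lt hp0)
    have step2 : ((a + b) / 2) ^ p ≤ (a ^ p + b ^ p) / 2 := by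
      have hc := (convexOn_rpow hp).2 (Set.mem_Ici.2 ha) (Set.mem_Ici.2 hb)
        (by norm_num : (0:ℝ) ≤ 1/2) (by norm_num : (0:ℝ) ≤ 1/2) (by norm_num)
      simp only [smul_eq_mul] at hc
      have e1 : (1/2 : ℝ) * a + (1/2 : ℝ) * b = (a + b) / 2 := by ring
      rw [e1] at hc
      calc ((a + b) / 2) ^ p ≤ 1/2 * a ^ p + 1/2 * b ^ p := hc
        _ = (a ^ p + b ^ p) / 2 := by ring
    exact le_trans step1 step2
  have hmono : ∫ ω, ‖S ω‖ ^ p ∂μ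
      ≤ ∫ ω, (‖S ω + T ω‖ ^ p + ‖S ω - T ω‖ ^ p) / 2 ∂μ :=
    integral_mono hintS ((hintAdd.add hintSub).div_const 2) hpoint
  have hsplit : ∫ ω, (‖S ω + T ω‖ ^ p + ‖S ω - T ω‖ ^ p) / 2 ∂μ
      = ∫ ω, ‖S ω + T ω‖ ^ p ∂μ := by
    rw [integral_div, integral_add hintAdd hintSub, hEq]
    ring
  have hfinal : ∫ ω, ‖S ω‖ ^ p ∂μ ≤ ∫ ω, ‖S ω + T ω‖ ^ p ∂μ := by
    rw [← hsplit]; exact hmono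
  calc ∫ ω, ‖∑ k ∈ I, ξ k ω‖ ^ p ∂μ = ∫ ω, ‖S ω‖ ^ p ∂μ := rfl
    _ ≤ ∫ ω, ‖S ω + T ω‖ ^ p ∂μ := hfinal
    _ = ∫ ω, ‖∑ k ∈ J, ξ k ω‖ ^ p ∂μ := by
        congr 1; funext ω; rw [hJsum ω]

open ProbabilityTheory in
/-- Kahane's contraction principle, subset form. -/
theorem kahane_contraction_subset
    {X : Type} [NormedAddCommGroup X] [NormedSpace ℝ X]
    [MeasurableSpace X] [BorelSpace X]
    {Ω : Type} [MeasurableSpace Ω] (μ : Measure Ω) [IsProbabilityMeasure μ]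
    (p : ℝ) (hp : 1 ≤ p) (n : ℕ) (ξ : Fin n → Ω → X)
    (hmeas : ∀ k, Measurable (ξ k))
    (hindep : iIndepFun ξ μ)
    (hsymm : ∀ k, Measure.map (ξ k) μ = Measure.map (fun ω => -(ξ k ω)) μ)
    (hLp : ∀ k, MemLp (ξ k) (ENNReal.ofReal p) μ)
    (I J : Finset (Fin n)) (hIJ : I ⊆ J) :
    ∫ ω, ‖∑ k ∈ I, ξ k ω‖ ^ p ∂μ ≤ ∫ ω, ‖∑ k ∈ J, ξ k ω‖ ^ p ∂μ := by
  classical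
  -- strongly measurable versions, to get a separable range
  have hsm : ∀ k, AEStronglyMeasurable (ξ k) μ := fun k => (hLp k).aestronglyMeasurable
  set η : Fin n → Ω → X := fun k => (hsm k).mk (ξ k) with hη
  have hηsm : ∀ k, StronglyMeasurable (η k) := fun k => (hsm k).stronglyMeasurable_mk
  have hηae : ∀ k, ξ k =ᵐ[μ] η k := fun k => (hsm k).ae_eq_mk
  -- the separable closed submodule
  set Y : Submodule ℝ X := (Submodule.span ℝ (⋃ k, Set.range (η k))).topologicalClosure with hYdef
  have hYclosed : IsClosed (Y : Set X) := Submodule.isClosed_topologicalClosure _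
  have hYsep : TopologicalSpace.IsSeparable (Y : Set X) := by
    have h1 : TopologicalSpace.IsSeparable (⋃ k, Set.range (η k)) :=
      TopologicalSpace.IsSeparable.iUnion fun k => (hηsm k).isSeparable_range
    exact (h1.span).closure
  have hηmem : ∀ k ω, η k ω ∈ Y := fun k ω =>
    Submodule.le_topologicalClosure _
      (Submodule.subset_span (Set.mem_iUnion.2 ⟨k, Set.mem_range_self ω⟩))
  haveI : TopologicalSpace.SeparableSpace (Y : Set X) := hYsep.separableSpace
  haveI : SecondCountableTopology Y :=
    UniformSpace.secondCountable_of_separable (Y : Set X)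
  -- the retraction onto Y
  set χ : X → X := fun x => if x ∈ Y then x else 0 with hχdef
  have hχmem : ∀ x, χ x ∈ Y := by
    intro x
    by_cases hx : x ∈ Y <;> simp [hχdef, hx]
  have hχmeas : Measurable χ := by
    have hYm : MeasurableSet {x : X | x ∈ Y} := hYclosed.measurableSet
    exact Measurable.ite hYm measurable_id measurable_const
  set e : X → Y := fun x => ⟨χ x, hχmem x⟩ with hedef
  have hemeas : Measurable e := hχmeas.subtype_mk
  set ζ : Fin n → Ω → Y := fun k ω => e (ξ k ω) with hζdef
  have hζmeas : ∀ k, Measurable (ζ k) := fun k => hemeas.comp (hmeas k)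
  have hζindep : iIndepFun ζ μ :=
    hindep.comp (fun _ => e) (fun _ => hemeas)
  have hζae : ∀ k, (fun ω => ((ζ k ω : X))) =ᵐ[μ] ξ k := by
    intro k
    filter_upwards [hηae k] with ω hω
    have hmem : ξ k ω ∈ Y := by rw [hω]; exact hηmem k ω
    simp [hζdef, hedef, hχdef, hmem]
  -- symmetry transfers
  have hcoe : MeasurableEmbedding ((↑) : Y → X) :=
    MeasurableEmbedding.subtype_coe hYclosed.measurableSet
  have map_eq_of_coe : ∀ (f g : Ω → Y), Measurable f → Measurable g →
      μ.map (fun ω => (f ω : X)) = μ.map (fun ω => (g ω : X)) → μ.map f = μ.map g := by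
    intro f g hf hg h
    ext s hs
    have hsm' : MeasurableSet (((↑) : Y → X) '' s) := hcoe.measurableSet_image.2 hs
    have hps : ∀ (F : Ω → Y), F ⁻¹' s = (fun ω => (F ω : X)) ⁻¹' (((↑) : Y → X) '' s) := by
      intro F
      ext ω
      simp only [Set.mem_preimage, Set.mem_image]
      constructor
      · intro hω; exact ⟨F ω, hω, rfl⟩
      · rintro ⟨y, hy, hyeq⟩
        rwa [← Subtype.coe_injective hyeq]
    rw [Measure.map_apply hf hs, Measure.map_apply hg hs, hps f, hps g,
      ← Measure.map_apply (show Measurable (fun ω => ((f ω : X))) from hcoe.measurable.comp hf) hsm',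
      ← Measure.map_apply (show Measurable (fun ω => ((g ω : X))) from hcoe.measurable.comp hg) hsm']
    exact congrFun (congrArg _ h) _
  have hζsymm : ∀ k, Measure.map (ζ k) μ = Measure.map (fun ω => -(ζ k ω)) μ := by
    intro k
    refine map_eq_of_coe _ _ (hζmeas k) (hζmeas k).neg ?_
    have h1 : μ.map (fun ω => ((ζ k ω : X))) = μ.map (ξ k) := Measure.map_congr (hζae k)
    have h2 : μ.map (fun ω => ((-(ζ k ω) : Y) : X)) = μ.map (fun ω => -(ξ k ω)) := by
      refine Measure.map_congr ?_
      filter_upwards [hζae k] with ω hω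
      simp [hω]
    rw [h1, h2, hsymm k]
  -- ℒp transfers
  have hζLp : ∀ k, MemLp (ζ k) (ENNReal.ofReal p) μ := by
    intro k
    refine ⟨(hζmeas k).aestronglyMeasurable, ?_⟩
    have hnorm : (fun ω => ‖ζ k ω‖) =ᵐ[μ] fun ω => ‖ξ k ω‖ := by
      filter_upwards [hζae k] with ω hω
      rw [← hω]
      rfl
    calc eLpNorm (ζ k) (ENNReal.ofReal p) μ
        = eLpNorm (fun ω => ‖ζ k ω‖) (ENNReal.ofReal p) μ := (eLpNorm_norm _).symm
      _ = eLpNorm (fun ω => ‖ξ k ω‖) (ENNReal.ofReal p) μ := eLpNorm_congr_ae hnorm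
      _ = eLpNorm (ξ k) (ENNReal.ofReal p) μ := eLpNorm_norm _
      _ < ⊤ := (hLp k).2
  -- transfer the integrals
  have hsumae : ∀ s : Finset (Fin n),
      (fun ω => ‖∑ k ∈ s, ξ k ω‖ ^ p) =ᵐ[μ] fun ω => ‖∑ k ∈ s, ζ k ω‖ ^ p := by
    intro s
    have h : ∀ᵐ ω ∂μ, ∀ k ∈ s, ((ζ k ω : X)) = ξ k ω :=
      (ae_ball_iff s.countable_toSet).2 fun k _ => hζae k
    filter_upwards [h] with ω hω
    have hsum : ((∑ k ∈ s, ζ k ω : Y) : X) = ∑ k ∈ s, ξ k ω := by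
      rw [Submodule.coe_sum]
      exact Finset.sum_congr rfl fun k hk => hω k hk
    rw [← hsum]
    rfl
  rw [integral_congr_ae (hsumae I), integral_congr_ae (hsumae J)]
  exact kahane_contraction_subset_aux μ p hp n ζ hζmeas hζindep hζsymm hζLp I J hIJ
end
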